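/- For all integers m > n ≥ 1 and every integer a ≥ 2, the greatest common divisor of Φ_m(a) and Φ_n(a) divides m, where Φ_k denotes the k-th cyclotomic polynomial. -/

import Mathlib

open Polynomial Finset

theorem stmt_0 (a : ℤ) (ha : 2 ≤ a) (m n : ℕ) (hn : 1 ≤ n) (hmn : n < m) :
    (Int.gcd ((Polynomial.cyclotomic m ℤ).eval a) ((Polynomial.cyclotomic n ℤ).eval a)) ∣ m := by
  set g : ℕ := Int.gcd ((cyclotomic m ℤ).eval a) ((cyclotomic n ℤ).eval a) with hg
  set d : ℕ := Nat.gcd m n with hd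
  have hdm : d ∣ m := Nat.gcd_dvd_left m n
  have hdn : d ∣ n := Nat.gcd_dvd_right m n
  have hd1 : 1 ≤ d := Nat.pos_of_ne_zero (fun h => by
    have := Nat.eq_zero_of_gcd_eq_zero_right h
    omega)
  have hdltm : d < m := lt_of_le_of_lt (Nat.le_of_dvd hn hdn) hmn
  -- g divides a^m - 1 and a^n - 1
  have hgm : (g : ℤ) ∣ a ^ m - 1 := by
    refine (Int.gcd_dvd_left _ _).trans ?_
    have := Polynomial.eval_dvd (p := cyclotomic m ℤ) (q := X ^ m - 1)
      (cyclotomic.dvd_X_pow_sub_one m ℤ) (x := a)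
    simpa using this
  have hgn : (g : ℤ) ∣ a ^ n - 1 := by
    refine (Int.gcd_dvd_right _ _).trans ?_
    have := Polynomial.eval_dvd (p := cyclotomic n ℤ) (q := X ^ n - 1)
      (cyclotomic.dvd_X_pow_sub_one n ℤ) (x := a)
    simpa using this
  -- work in ZMod g
  set b : ZMod g := ((a : ℤ) : ZMod g) with hb
  have hbm : b ^ m = 1 := by
    have : ((a ^ m - 1 : ℤ) : ZMod g) = 0 := by
      rwa [ZMod.intCast_zmod_eq_zero_iff_dvd]
    push_cast at this
    linear_combination this
  have hbn : b ^ n = 1 := by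
    have : ((a ^ n - 1 : ℤ) : ZMod g) = 0 := by
      rwa [ZMod.intCast_zmod_eq_zero_iff_dvd]
    push_cast at this
    linear_combination this
  have hbd : b ^ d = 1 := by
    have hord : orderOf b ∣ d :=
      Nat.dvd_gcd (orderOf_dvd_of_pow_eq_one hbm) (orderOf_dvd_of_pow_eq_one hbn)
    exact orderOf_dvd_iff_pow_eq_one.mp hord
  -- geometric sum
  set S : ℤ := ∑ i ∈ range (m / d), (a ^ d) ^ i with hS
  have hgeom : S * (a ^ d - 1) = a ^ m - 1 := by
    rw [hS, geom_sum_mul, ← pow_mul, Nat.mul_div_cancel' hdm]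
  -- cyclotomic m divides S
  have hmem : d ∈ m.properDivisors := Nat.mem_properDivisors.mpr ⟨hdm, hdltm⟩
  have hpoly := X_pow_sub_one_mul_cyclotomic_dvd_X_pow_sub_one_of_dvd ℤ hmem
  obtain ⟨c, hc⟩ := Polynomial.eval_dvd (x := a) hpoly
  simp only [eval_mul, eval_sub, eval_pow, eval_X, eval_one] at hc
  have had : (a ^ d - 1 : ℤ) ≠ 0 := by
    have : (1 : ℤ) < a ^ d := by
      calc (1:ℤ) < 2 := one_lt_two
      _ ≤ a := ha
      _ = a ^ 1 := (pow_one a).symm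
      _ ≤ a ^ d := pow_le_pow_right₀ (by omega) hd1
    omega
  have hSdvd : ((cyclotomic m ℤ).eval a) ∣ S := by
    refine ⟨c, ?_⟩
    apply mul_left_cancel₀ had
    calc (a ^ d - 1) * S = a ^ m - 1 := by linarith [hgeom]
      _ = (a ^ d - 1) * ((cyclotomic m ℤ).eval a * c) := by rw [hc]; ring
  -- S ≡ m/d mod g, and g ∣ S
  have hgS : (g : ℤ) ∣ S := (Int.gcd_dvd_left _ _).trans hSdvd
  have hScast : ((S : ℤ) : ZMod g) = ((m / d : ℕ) : ZMod g) := by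
    rw [hS]
    push_cast
    rw [Finset.sum_congr rfl (fun i (_ : i ∈ range (m / d)) =>
      show ((b ^ d) ^ i : ZMod g) = 1 by rw [hbd, one_pow])]
    simp
  have hmd0 : ((m / d : ℕ) : ZMod g) = 0 := by
    rw [← hScast, ZMod.intCast_zmod_eq_zero_iff_dvd]
    exact hgS
  have hgmd : g ∣ m / d := by
    have hg0 : g ≠ 0 := by
      intro h0
      rw [hg, Int.gcd_eq_zero_iff] at h0
      have := cyclotomic_pos' m (show (1:ℤ) < a by omega)
      omega
    haveI : NeZero g := ⟨hg0⟩
    exact (ZMod.natCast_eq_zero_iff _ _).mp hmd0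
  exact hgmd.trans (Nat.div_dvd_of_dvd hdm)
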